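/- Define birational maps on tuples (a₀, a₁, a₂; t; q, p) of real numbers by: w₁(a₀,a₁,a₂;t;q,p) = (a₀+a₁, −a₁, a₂+a₁; t; q, p − a₁/q) and w₂(a₀,a₁,a₂;t;q,p) = (a₀+a₂, a₁+a₂, −a₂; t; q + a₂/p, p). Then for all real a₀, a₁, a₂, t, q, p with q ≠ 0, p ≠ 0, qp − a₁ ≠ 0 and qp + a₂ ≠ 0, both compositions w₁ ∘ w₂ ∘ w₁ and w₂ ∘ w₁ ∘ w₂ are defined at (a₀, a₁, a₂; t; q, p) and both equal (a₀ + 2a₁ + 2a₂, −a₂, −a₁; t; q(qp + a₂)/(qp − a₁), p(qp − a₁)/(qp + a₂)); in particular the braid relation w₁w₂w₁ = w₂w₁w₂ holds. -/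

import Mathlib

/-- The birational action of w₁ on (a₀, a₁, a₂; t; q, p). -/
noncomputable def w1Map : ℝ × ℝ × ℝ × ℝ × ℝ × ℝ → ℝ × ℝ × ℝ × ℝ × ℝ × ℝ :=
  fun (a0, a1, a2, t, q, p) => (a0 + a1, -a1, a2 + a1, t, q, p - a1 / q)

/-- The birational action of w₂ on (a₀, a₁, a₂; t; q, p). -/
noncomputable def w2Map : ℝ × ℝ × ℝ × ℝ × ℝ × ℝ → ℝ × ℝ × ℝ × ℝ × ℝ × ℝ :=
  fun (a0, a1, a2, t, q, p) => (a0 + a2, a1 + a2, -a2, t, q + a2 / p, p)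

/-- the braid relation w₁w₂w₁ = w₂w₁w₂ for the birational representation of
W(A₂⁽¹⁾), with the common value computed explicitly. -/
theorem stmt8 (a0 a1 a2 t q p : ℝ)
    (hq : q ≠ 0) (hp : p ≠ 0) (h1 : q * p - a1 ≠ 0) (h2 : q * p + a2 ≠ 0) :
    w1Map (w2Map (w1Map (a0, a1, a2, t, q, p))) =
      (a0 + 2 * a1 + 2 * a2, -a2, -a1, t,
        q * (q * p + a2) / (q * p - a1), p * (q * p - a1) / (q * p + a2)) ∧
    w2Map (w1Map (w2Map (a0, a1, a2, t, q, p))) =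
      (a0 + 2 * a1 + 2 * a2, -a2, -a1, t,
        q * (q * p + a2) / (q * p - a1), p * (q * p - a1) / (q * p + a2)) := by
  -- First composition: w1 then w2 then w1
  have e1 : p - a1 / q = (q * p - a1) / q := by field_simp
  have e1ne : p - a1 / q ≠ 0 := by rw [e1]; exact div_ne_zero h1 hq
  have e2 : q + (a2 + a1) / (p - a1 / q) = q * (q * p + a2) / (q * p - a1) := by
    rw [e1]; field_simp; ring
  have e2ne : q + (a2 + a1) / (p - a1 / q) ≠ 0 := by
    rw [e2]; exact div_ne_zero (mul_ne_zero hq h2) h1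
  have e3 : p - a1 / q - (-a1 + (a2 + a1)) / (q + (a2 + a1) / (p - a1 / q)) =
      p * (q * p - a1) / (q * p + a2) := by
    rw [e2, e1]; field_simp; ring
  -- Second composition: w2 then w1 then w2
  have f1 : q + a2 / p = (q * p + a2) / p := by field_simp
  have f1ne : q + a2 / p ≠ 0 := by rw [f1]; exact div_ne_zero h2 hp
  have f2 : p - (a1 + a2) / (q + a2 / p) = p * (q * p - a1) / (q * p + a2) := by
    rw [f1, div_div_eq_mul_div, eq_div_iff h2, sub_mul, div_mul_cancel₀ _ h2]; ring
  have f2ne : p - (a1 + a2) / (q + a2 / p) ≠ 0 := by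
    rw [f2]; exact div_ne_zero (mul_ne_zero hp h1) h2
  have f3 : q + a2 / p + (-a2 + (a1 + a2)) / (p - (a1 + a2) / (q + a2 / p)) =
      q * (q * p + a2) / (q * p - a1) := by
    rw [f2, f1]; field_simp; ring
  constructor
  · simp only [w1Map, w2Map, Prod.mk.injEq]
    exact ⟨by ring, by ring, by ring, trivial, e2, e3⟩
  · simp only [w1Map, w2Map, Prod.mk.injEq]
    exact ⟨by ring, by ring, by ring, trivial, f3, f2⟩
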